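/- Let P be a finite poset and d ≥ 2. The monoid ℤ_{≥0}A_P generated by the vectors ρ(C), as C ranges over all multichains of P of length d−1, is normal (i.e., ℤ_{≥0}A_P = ℤA_P ∩ ℚ_{≥0}A_P) if and only if P is a disjoint union of chains. -/

import Mathlib

/-- A multichain of length `d - 1`: a multiset of `d` pairwise comparable elements. -/
def IsMultichain {α : Type*} [PartialOrder α] (d : ℕ) (C : Multiset α) : Prop :=
  Multiset.card C = d ∧ ∀ a ∈ C, ∀ b ∈ C, a ≤ b ∨ b ≤ a

/-- `ρ(C)`: the integer vector of multiplicities of `C`. -/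
def rho {α : Type*} [DecidableEq α] (C : Multiset α) : α → ℤ :=
  fun a => (C.count a : ℤ)

/-- `ρ(C)` as a rational vector. -/
def rhoQ {α : Type*} [DecidableEq α] (C : Multiset α) : α → ℚ :=
  fun a => (C.count a : ℚ)

/-- The rational cone `ℚ_{≥0} A_P` generated by the vectors `ρ(C)`. -/
def coneQ (α : Type*) [Fintype α] [DecidableEq α] [PartialOrder α] (d : ℕ) :
    Set (α → ℚ) :=
  { q | ∃ (m : ℕ) (C : Fin m → Multiset α) (c : Fin m → ℚ),
      (∀ k, IsMultichain d (C k) ∧ 0 ≤ c k) ∧ q = ∑ k, c k • rhoQ (C k) }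

open Finset

set_option linter.unusedSectionVars false
open scoped Classical

section Aux

variable {α : Type*} [Fintype α] [DecidableEq α] [PartialOrder α] {d : ℕ}

/-- The generating set. -/
def gens (α : Type*) [Fintype α] [DecidableEq α] [PartialOrder α] (d : ℕ) : Set (α → ℤ) :=
  { v | ∃ C : Multiset α, IsMultichain d C ∧ v = rho C }

lemma card_sum_rho (C : Multiset α) : ∑ x, rho C x = (Multiset.card C : ℤ) := by
  simp [rho, ← Nat.cast_sum]

lemma exists_le_card {β : Type*} :
    ∀ (k : ℕ) (T : Multiset β), k ≤ Multiset.card T → ∃ C, C ≤ T ∧ Multiset.card C = k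
  | 0, T, _ => ⟨0, Multiset.zero_le T, rfl⟩
  | (k+1), T, h => by
      have hT : T ≠ 0 := by rintro rfl; simp at h
      obtain ⟨x, hx⟩ := Multiset.exists_mem_of_ne_zero hT
      obtain ⟨C, hC, hcard⟩ := exists_le_card k (T.erase x)
        (by rw [Multiset.card_erase_of_mem hx, Nat.pred_eq_sub_one]; omega)
      exact ⟨x ::ₘ C, by
        rw [← Multiset.cons_erase hx]; exact Multiset.cons_le_cons x hC, by simp [hcard]⟩

lemma dvd_F_rho (hP : ∀ a b c : α, (a ≤ b ∨ b ≤ a) → (b ≤ c ∨ c ≤ b) → (a ≤ c ∨ c ≤ a))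
    (a : α) (C : Multiset α) (hC : IsMultichain d C) :
    (d : ℤ) ∣ ∑ b ∈ univ.filter (fun b => a ≤ b ∨ b ≤ a), rho C b := by
  by_cases hx : ∃ x ∈ C, (a ≤ x ∨ x ≤ a)
  · obtain ⟨x, hxC, hax⟩ := hx
    have hsub : ∀ b, b ∈ C → (a ≤ b ∨ b ≤ a) := fun b hb => hP a x b hax (hC.2 x hxC b hb)
    have heq : ∑ b ∈ univ.filter (fun b => a ≤ b ∨ b ≤ a), rho C b = ∑ b, rho C b := by
      apply Finset.sum_subset (filter_subset _ _)
      intro b _ hb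
      simp only [mem_filter, mem_univ, true_and] at hb
      have hbC : b ∉ C := fun h => hb (hsub b h)
      simp [rho, Multiset.count_eq_zero_of_notMem hbC]
    rw [heq, card_sum_rho, hC.1]
  · push_neg at hx
    have heq : ∑ b ∈ univ.filter (fun b => a ≤ b ∨ b ≤ a), rho C b = 0 := by
      apply Finset.sum_eq_zero
      intro b hb
      simp only [mem_filter, mem_univ, true_and] at hb
      have hbC : b ∉ C := fun h => by have := hx b h; tauto
      simp [rho, Multiset.count_eq_zero_of_notMem hbC]
    rw [heq]
    exact dvd_zero _

lemma dvd_of_mem_group (hP : ∀ a b c : α, (a ≤ b ∨ b ≤ a) → (b ≤ c ∨ c ≤ b) → (a ≤ c ∨ c ≤ a))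
    {z : α → ℤ} (hz : z ∈ AddSubgroup.closure (gens α d)) (a : α) :
    (d : ℤ) ∣ ∑ b ∈ univ.filter (fun b => a ≤ b ∨ b ≤ a), z b := by
  induction hz using AddSubgroup.closure_induction with
  | mem v hv =>
      obtain ⟨C, hC, rfl⟩ := hv
      exact dvd_F_rho hP a C hC
  | zero => simp
  | add x y _ _ hx hy => simp only [Pi.add_apply]; rw [Finset.sum_add_distrib]; exact dvd_add hx hy
  | neg x _ hx => simp only [Pi.neg_apply]; rw [Finset.sum_neg_distrib]; exact (dvd_neg).2 hx


lemma mem_monoid_of (hP : ∀ a b c : α, (a ≤ b ∨ b ≤ a) → (b ≤ c ∨ c ≤ b) → (a ≤ c ∨ c ≤ a))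
    (hd : 2 ≤ d) :
    ∀ (n : ℕ) (z : α → ℤ), (∀ x, 0 ≤ z x) →
    (∀ a, (d : ℤ) ∣ ∑ b ∈ univ.filter (fun b => a ≤ b ∨ b ≤ a), z b) →
    (∑ x, (z x).toNat) ≤ n → z ∈ AddSubmonoid.closure (gens α d) := by
  intro n
  induction n with
  | zero =>
      intro z hpos hdvd hn
      have hz : z = 0 := by
        funext x
        have h0 : ∑ x, (z x).toNat = 0 := Nat.le_zero.mp hn
        have := (Finset.sum_eq_zero_iff.mp h0) x (mem_univ x)
        have := hpos x
        simp only [Pi.zero_apply]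
        omega
      rw [hz]; exact zero_mem _
  | succ n ih =>
      intro z hpos hdvd hn
      by_cases hz : z = 0
      · rw [hz]; exact zero_mem _
      · obtain ⟨a, ha⟩ := Function.ne_iff.mp hz
        have hza : 0 < z a := lt_of_le_of_ne (hpos a) (by simpa [eq_comm] using ha)
        set s : Finset α := univ.filter (fun b => a ≤ b ∨ b ≤ a) with hs
        have haS : a ∈ s := by simp [hs]
        have hsum_pos : 0 < ∑ b ∈ s, z b :=
          lt_of_lt_of_le hza (Finset.single_le_sum (fun b _ => hpos b) haS)
        have hd_le : (d : ℤ) ≤ ∑ b ∈ s, z b := Int.le_of_dvd hsum_pos (hdvd a)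
        set T : Multiset α := ∑ b ∈ s, Multiset.replicate (z b).toNat b with hT
        have hcount : ∀ b, T.count b = if b ∈ s then (z b).toNat else 0 := by
          intro b
          rw [hT, Multiset.count_sum']
          simp [Multiset.count_replicate]
        have hcardT : Multiset.card T = ∑ b ∈ s, (z b).toNat := by
          simp [hT]
        have hcast : ((∑ b ∈ s, (z b).toNat : ℕ) : ℤ) = ∑ b ∈ s, z b := by
          push_cast
          exact Finset.sum_congr rfl fun b _ => Int.toNat_of_nonneg (hpos b)
        have hd_le' : d ≤ Multiset.card T := by
          rw [hcardT]
          have : (d : ℤ) ≤ ((∑ b ∈ s, (z b).toNat : ℕ) : ℤ) := by rw [hcast]; exact hd_le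
          exact_mod_cast this
        obtain ⟨C, hCT, hCcard⟩ := exists_le_card d T hd_le'
        have hmemT : ∀ b ∈ T, a ≤ b ∨ b ≤ a := by
          intro b hb
          rw [hT] at hb
          rw [Multiset.mem_sum] at hb
          obtain ⟨x, hxs, hbx⟩ := hb
          rw [Multiset.eq_of_mem_replicate hbx]
          simpa [hs] using hxs
        have hCchain : IsMultichain d C := by
          refine ⟨hCcard, fun x hx y hy => ?_⟩
          have hax := hmemT x (Multiset.mem_of_le hCT hx)
          have hay := hmemT y (Multiset.mem_of_le hCT hy)
          exact hP x a y (Or.symm hax) hay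
        have hcount_le : ∀ x, (C.count x : ℤ) ≤ z x := by
          intro x
          have h1 : C.count x ≤ T.count x := Multiset.count_le_of_le x hCT
          rw [hcount x] at h1
          by_cases hxs : x ∈ s
          · rw [if_pos hxs] at h1
            calc (C.count x : ℤ) ≤ ((z x).toNat : ℤ) := by exact_mod_cast h1
              _ = z x := Int.toNat_of_nonneg (hpos x)
          · rw [if_neg hxs] at h1
            have : C.count x = 0 := Nat.le_zero.mp h1
            rw [this]
            exact_mod_cast hpos x
        set z' : α → ℤ := z - rho C with hz'
        have hz'pos : ∀ x, 0 ≤ z' x := by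
          intro x
          simp only [hz', Pi.sub_apply, rho]
          linarith [hcount_le x]
        have hz'dvd : ∀ a', (d : ℤ) ∣ ∑ b ∈ univ.filter (fun b => a' ≤ b ∨ b ≤ a'), z' b := by
          intro a'
          have heq : ∑ b ∈ univ.filter (fun b => a' ≤ b ∨ b ≤ a'), z' b
              = (∑ b ∈ univ.filter (fun b => a' ≤ b ∨ b ≤ a'), z b)
                - ∑ b ∈ univ.filter (fun b => a' ≤ b ∨ b ≤ a'), rho C b := by
            simp only [hz', Pi.sub_apply]
            rw [Finset.sum_sub_distrib]
          rw [heq]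
          exact dvd_sub (hdvd a') (dvd_F_rho hP a' C hCchain)
        have hsumC : ∑ x, (C.count x : ℤ) = (d : ℤ) := by
          have := card_sum_rho C
          simp only [rho] at this
          rw [this, hCcard]
        have hmeasure : ∑ x, (z' x).toNat ≤ n := by
          have hcast2 : ((∑ x, (z' x).toNat : ℕ) : ℤ) = (∑ x, z x) - d := by
            push_cast
            rw [Finset.sum_congr rfl fun x _ => Int.toNat_of_nonneg (hz'pos x)]
            simp only [hz', Pi.sub_apply, rho]
            rw [show univ.sum (z - rho C) = ∑ x, (z x - (C.count x : ℤ)) from rfl,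
              Finset.sum_sub_distrib, hsumC]
          have hcast3 : ((∑ x, (z x).toNat : ℕ) : ℤ) = ∑ x, z x := by
            push_cast
            exact Finset.sum_congr rfl fun x _ => Int.toNat_of_nonneg (hpos x)
          omega
        have hzeq : z = rho C + z' := by
          simp [hz']
        rw [hzeq]
        exact add_mem (AddSubmonoid.subset_closure ⟨C, hCchain, rfl⟩)
          (ih z' hz'pos hz'dvd hmeasure)


lemma nonneg_of_cone {q : α → ℚ} (h : q ∈ coneQ α d) (x : α) : 0 ≤ q x := by
  obtain ⟨m, C, c, hk, rfl⟩ := h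
  rw [Finset.sum_apply]
  refine Finset.sum_nonneg fun k _ => ?_
  simp only [Pi.smul_apply, smul_eq_mul, rhoQ]
  exact mul_nonneg (hk k).2 (by positivity)

lemma coneQ_add {q1 q2 : α → ℚ} (h1 : q1 ∈ coneQ α d) (h2 : q2 ∈ coneQ α d) :
    q1 + q2 ∈ coneQ α d := by
  obtain ⟨m1, C1, c1, hk1, rfl⟩ := h1
  obtain ⟨m2, C2, c2, hk2, rfl⟩ := h2
  refine ⟨m1 + m2, Fin.addCases C1 C2, Fin.addCases c1 c2, fun k => ?_, ?_⟩
  · refine Fin.addCases (fun i => ?_) (fun i => ?_) k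
    · simpa using hk1 i
    · simpa using hk2 i
  · rw [Fin.sum_univ_add]
    simp

lemma cone_of_mem_monoid {z : α → ℤ} (hz : z ∈ AddSubmonoid.closure (gens α d)) :
    (fun x => (z x : ℚ)) ∈ coneQ α d := by
  induction hz using AddSubmonoid.closure_induction with
  | mem v hv =>
      obtain ⟨C, hC, rfl⟩ := hv
      refine ⟨1, fun _ => C, fun _ => 1, fun k => ⟨hC, zero_le_one⟩, ?_⟩
      funext x
      simp [rho, rhoQ]
  | zero =>
      refine ⟨0, Fin.elim0, Fin.elim0, fun k => k.elim0, ?_⟩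
      funext x
      simp
  | add x y _ _ hx hy =>
      have heq : (fun t => (((x + y) t : ℤ) : ℚ))
          = (fun t => ((x t : ℤ) : ℚ)) + fun t => ((y t : ℤ) : ℚ) := by
        funext t; simp only [Pi.add_apply]; push_cast; ring
      rw [heq]
      exact coneQ_add hx hy

lemma monoid_le_group {z : α → ℤ} (hz : z ∈ AddSubmonoid.closure (gens α d)) :
    z ∈ AddSubgroup.closure (gens α d) :=
  (AddSubmonoid.closure_le.mpr (AddSubgroup.subset_closure)).trans le_rfl hz

lemma sum_of_mem_monoid {z : α → ℤ} (hz : z ∈ AddSubmonoid.closure (gens α d)) :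
    z = 0 ∨ z ∈ gens α d ∨ (2 * (d : ℤ)) ≤ ∑ x, z x := by
  have hgsum : ∀ v ∈ gens α d, ∑ x, v x = (d : ℤ) := by
    rintro v ⟨C, hC, rfl⟩
    rw [card_sum_rho, hC.1]
  induction hz using AddSubmonoid.closure_induction with
  | mem v hv => exact Or.inr (Or.inl hv)
  | zero => exact Or.inl rfl
  | add x y _ _ hx hy =>
      rcases hx with rfl | hx
      · rw [zero_add]; exact hy
      rcases hy with rfl | hy
      · rw [add_zero]; exact Or.inr hx
      have hsx : (d : ℤ) ≤ ∑ t, x t := by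
        rcases hx with hx | hx
        · rw [hgsum x hx]
        · have hd0 : (0:ℤ) ≤ d := by positivity
          linarith
      have hsy : (d : ℤ) ≤ ∑ t, y t := by
        rcases hy with hy | hy
        · rw [hgsum y hy]
        · have hd0 : (0:ℤ) ≤ d := by positivity
          linarith
      refine Or.inr (Or.inr ?_)
      have : ∑ t, (x + y) t = (∑ t, x t) + ∑ t, y t := by
        simp only [Pi.add_apply]; rw [Finset.sum_add_distrib]
      rw [this]
      linarith

end Aux

lemma two_elt_chain {α : Type*} [PartialOrder α] {x y : α} (hxy : x ≤ y ∨ y ≤ x)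
    {u v : α} (hu : u = x ∨ u = y) (hv : v = x ∨ v = y) : u ≤ v ∨ v ≤ u := by
  rcases hu with rfl | rfl <;> rcases hv with rfl | rfl
  · exact Or.inl le_rfl
  · exact hxy
  · exact hxy.symm
  · exact Or.inl le_rfl

/-- the monoid `ℤ_{≥0}A_P` is normal (equals `ℤA_P ∩ ℚ_{≥0}A_P`) iff the
poset is a disjoint union of chains, i.e. comparability is transitive. -/
theorem stmt8 (α : Type*) [Fintype α] [DecidableEq α] [PartialOrder α]
    (d : ℕ) (hd : 2 ≤ d) :
    (∀ z : α → ℤ,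
        z ∈ AddSubmonoid.closure { v | ∃ C : Multiset α, IsMultichain d C ∧ v = rho C } ↔
        (z ∈ AddSubgroup.closure { v | ∃ C : Multiset α, IsMultichain d C ∧ v = rho C } ∧
          (fun x => (z x : ℚ)) ∈ coneQ α d)) ↔
      (∀ a b c : α, (a ≤ b ∨ b ≤ a) → (b ≤ c ∨ c ≤ b) → (a ≤ c ∨ c ≤ a)) := by
  have hset : { v | ∃ C : Multiset α, IsMultichain d C ∧ v = rho C } = gens α d := rfl
  rw [hset]
  constructor
  · -- normality ⇒ transitive
    intro H a b c hab hbc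
    by_contra hac
    have hab' : a ≠ b := by rintro rfl; exact hac hbc
    have hbc' : b ≠ c := by rintro rfl; exact hac hab
    have hac' : a ≠ c := by rintro rfl; exact hac (Or.inl le_rfl)
    obtain ⟨e, rfl⟩ : ∃ e, d = e + 2 := ⟨d - 2, by omega⟩
    set C1 : Multiset α := a ::ₘ Multiset.replicate (e+1) b with hC1def
    set C2 : Multiset α := c ::ₘ Multiset.replicate (e+1) b with hC2def
    set C3 : Multiset α := Multiset.replicate (e+2) b with hC3def
    set D1 : Multiset α := a ::ₘ a ::ₘ Multiset.replicate e b with hD1def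
    set D2 : Multiset α := c ::ₘ c ::ₘ Multiset.replicate e b with hD2def
    have hC1 : IsMultichain (e+2) C1 := by
      refine ⟨by simp [hC1def], fun u hu v hv => ?_⟩
      have hu' : u = a ∨ u = b := by
        rcases Multiset.mem_cons.mp hu with h | h
        · exact Or.inl h
        · exact Or.inr (Multiset.eq_of_mem_replicate h)
      have hv' : v = a ∨ v = b := by
        rcases Multiset.mem_cons.mp hv with h | h
        · exact Or.inl h
        · exact Or.inr (Multiset.eq_of_mem_replicate h)
      exact two_elt_chain hab hu' hv'
    have hC2 : IsMultichain (e+2) C2 := by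
      refine ⟨by simp [hC2def], fun u hu v hv => ?_⟩
      have hu' : u = c ∨ u = b := by
        rcases Multiset.mem_cons.mp hu with h | h
        · exact Or.inl h
        · exact Or.inr (Multiset.eq_of_mem_replicate h)
      have hv' : v = c ∨ v = b := by
        rcases Multiset.mem_cons.mp hv with h | h
        · exact Or.inl h
        · exact Or.inr (Multiset.eq_of_mem_replicate h)
      exact two_elt_chain hbc.symm hu' hv'
    have hC3 : IsMultichain (e+2) C3 := by
      refine ⟨by simp [hC3def], fun u hu v hv => ?_⟩
      rw [Multiset.eq_of_mem_replicate hu, Multiset.eq_of_mem_replicate hv]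
      exact Or.inl le_rfl
    have hD1 : IsMultichain (e+2) D1 := by
      refine ⟨by simp [hD1def], fun u hu v hv => ?_⟩
      have hu' : u = a ∨ u = b := by
        rcases Multiset.mem_cons.mp hu with h | h
        · exact Or.inl h
        · rcases Multiset.mem_cons.mp h with h | h
          · exact Or.inl h
          · exact Or.inr (Multiset.eq_of_mem_replicate h)
      have hv' : v = a ∨ v = b := by
        rcases Multiset.mem_cons.mp hv with h | h
        · exact Or.inl h
        · rcases Multiset.mem_cons.mp h with h | h
          · exact Or.inl h
          · exact Or.inr (Multiset.eq_of_mem_replicate h)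
      exact two_elt_chain hab hu' hv'
    have hD2 : IsMultichain (e+2) D2 := by
      refine ⟨by simp [hD2def], fun u hu v hv => ?_⟩
      have hu' : u = c ∨ u = b := by
        rcases Multiset.mem_cons.mp hu with h | h
        · exact Or.inl h
        · rcases Multiset.mem_cons.mp h with h | h
          · exact Or.inl h
          · exact Or.inr (Multiset.eq_of_mem_replicate h)
      have hv' : v = c ∨ v = b := by
        rcases Multiset.mem_cons.mp hv with h | h
        · exact Or.inl h
        · rcases Multiset.mem_cons.mp h with h | h
          · exact Or.inl h
          · exact Or.inr (Multiset.eq_of_mem_replicate h)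
      exact two_elt_chain hbc.symm hu' hv'
    set z : α → ℤ := rho C1 + rho C2 - rho C3 with hzdef
    have hg : z ∈ AddSubgroup.closure (gens α (e+2)) := by
      apply sub_mem
      · exact add_mem (AddSubgroup.subset_closure ⟨C1, hC1, rfl⟩)
          (AddSubgroup.subset_closure ⟨C2, hC2, rfl⟩)
      · exact AddSubgroup.subset_closure ⟨C3, hC3, rfl⟩
    have hcone : (fun x => (z x : ℚ)) ∈ coneQ α (e+2) := by
      refine ⟨2, ![D1, D2], ![1/2, 1/2], ?_, ?_⟩
      · intro k
        fin_cases k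
        · exact ⟨hD1, by norm_num⟩
        · exact ⟨hD2, by norm_num⟩
      · rw [Fin.sum_univ_two]
        funext x
        simp only [hzdef, Pi.add_apply, Pi.sub_apply, Pi.smul_apply, smul_eq_mul,
          rho, rhoQ, hC1def, hC2def, hC3def, hD1def, hD2def,
          Matrix.cons_val_zero, Matrix.cons_val_one, Matrix.head_cons,
          Multiset.count_cons, Multiset.count_replicate]
        push_cast
        rcases eq_or_ne x a with rfl | hxa <;> rcases eq_or_ne x b with rfl | hxb <;>
          rcases eq_or_ne x c with rfl | hxc <;>
          (try simp_all) <;> (try split_ifs) <;> (try simp_all) <;> ring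
    have hm := (H z).2 ⟨hg, hcone⟩
    have hza : z a = 1 := by
      simp [hzdef, rho, hC1def, hC2def, hC3def, Multiset.count_cons,
        Multiset.count_replicate, hab', hac', hab'.symm, hac'.symm, hbc', hbc'.symm]
    have hzc : z c = 1 := by
      simp [hzdef, rho, hC1def, hC2def, hC3def, Multiset.count_cons,
        Multiset.count_replicate, hab', hac', hab'.symm, hac'.symm, hbc', hbc'.symm]
    have hzsum : ∑ x, z x = ((e : ℤ) + 2) := by
      simp only [hzdef, Pi.add_apply, Pi.sub_apply]
      rw [Finset.sum_sub_distrib, Finset.sum_add_distrib, card_sum_rho, card_sum_rho,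
        card_sum_rho, hC1.1, hC2.1, hC3.1]
      push_cast
      ring
    rcases sum_of_mem_monoid hm with h0 | hS | hbig
    · rw [h0] at hza; simp at hza
    · obtain ⟨C, hC, hzC⟩ := hS
      have haC : a ∈ C := by
        have h1 : (C.count a : ℤ) = 1 := by
          have h2 := congrFun hzC a
          simp only [rho] at h2
          omega
        rw [← Multiset.count_pos]
        have h3 : C.count a = 1 := by exact_mod_cast h1
        omega
      have hcC : c ∈ C := by
        have h1 : (C.count c : ℤ) = 1 := by
          have h2 := congrFun hzC c
          simp only [rho] at h2
          omega
        rw [← Multiset.count_pos]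
        have h3 : C.count c = 1 := by exact_mod_cast h1
        omega
      exact hac (hC.2 a haC c hcC)
    · rw [hzsum] at hbig
      push_cast at hbig
      omega
  · -- transitive ⇒ normality
    intro hP z
    constructor
    · intro hz
      exact ⟨monoid_le_group hz, cone_of_mem_monoid hz⟩
    · rintro ⟨hg, hc⟩
      refine mem_monoid_of hP hd (∑ x, (z x).toNat) z (fun x => ?_)
        (dvd_of_mem_group hP hg) le_rfl
      have := nonneg_of_cone hc x
      exact_mod_cast this
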